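/- arXiv:1712.05619 — 2 statements merged into one kernel-verified Lean document; each statement's English description precedes it below -/
import Mathlib

section
/- Let D be a double Gerstenhaber algebra of degree d with double bracket {{-,-}} of degree d. Then the associated bracket {α,β} = {{α,β}}'·{{α,β}}'' (multiplication of the two Sweedler components) satisfies the graded Loday–Leibniz identity: for homogeneous α, β, γ, {α,{{β,γ}}} = {{{α,β},γ}} + (-1)^{(|α|+d)(|β|+d)} {{β,{α,γ}}}, where {α,-} acts on a tensor x⊗y by {α,x⊗y} = {α,x}⊗y + (-1)^{(|α|+d)|x|} x⊗{α,y}. -/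
open TensorProduct

variable (k : Type*) [Field k] [CharZero k]
  (D : Type*) [Ring D] [Algebra k D]
  (𝒜 : ℤ → Submodule k D) [GradedAlgebra 𝒜] (d : ℤ)

/-- `{{α, x ⊗ y}}_L = {{α,x}} ⊗ y`, reassociated into `D ⊗ (D ⊗ D)`. -/
noncomputable def brL (bb : D →ₗ[k] D →ₗ[k] D ⊗[k] D) (α : D) :
    D ⊗[k] D →ₗ[k] D ⊗[k] (D ⊗[k] D) :=
  (TensorProduct.assoc k D D D).toLinearMap ∘ₗ LinearMap.rTensor D (bb α)

section SignAux

private lemma sgn_ite (n : ℤ) : ((-1:k)^n.natAbs) = if Even n then 1 else -1 := by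
  by_cases h : Even n
  · simp [h, Even.neg_one_pow (Int.natAbs_even.mpr h)]
  · have hn : Odd n.natAbs := Nat.not_even_iff_odd.mp (fun hc => h (Int.natAbs_even.mp hc))
    simp [h, Odd.neg_one_pow hn]

private lemma sgn_mul (a b : ℤ) :
    ((-1:k)^a.natAbs) * ((-1:k)^b.natAbs) = (-1:k)^(a+b).natAbs := by
  rw [sgn_ite k a, sgn_ite k b, sgn_ite k (a+b)]
  by_cases ha : Even a <;> by_cases hb : Even b <;>
    simp [ha, hb, Int.even_add]

private lemma sgn_congr {a b : ℤ} (h : Even (a - b)) :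
    ((-1:k)^a.natAbs) = ((-1:k)^b.natAbs) := by
  rw [sgn_ite k a, sgn_ite k b]
  rw [Int.even_sub] at h
  by_cases ha : Even a
  · simp [ha, h.mp ha]
  · have hb : ¬ Even b := fun hb => ha (h.mpr hb)
    simp [ha, hb]

private lemma sgn_one {a : ℤ} (h : Even a) : ((-1:k)^a.natAbs) = 1 :=
  Even.neg_one_pow (Int.natAbs_even.mpr h)

end SignAux

section TensorAux

/-- multiply the first two factors of `D ⊗ (D ⊗ D)` -/
noncomputable def mu1 : D ⊗[k] (D ⊗[k] D) →ₗ[k] D ⊗[k] D :=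
  LinearMap.rTensor D (LinearMap.mul' k D) ∘ₗ (TensorProduct.assoc k D D D).symm.toLinearMap

/-- multiply the last two factors of `D ⊗ (D ⊗ D)` -/
noncomputable def mu2 : D ⊗[k] (D ⊗[k] D) →ₗ[k] D ⊗[k] D :=
  LinearMap.lTensor D (LinearMap.mul' k D)

variable {k D}

private lemma mu1_tmul (x : D) (w : D ⊗[k] D) :
    mu1 k D (x ⊗ₜ[k] w) = LinearMap.rTensor D (LinearMap.mulLeft k x) w := by
  induction w using TensorProduct.induction_on with
  | zero => simp only [tmul_zero, map_zero]
  | tmul a b => simp [mu1]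
  | add a b ha hb => simp only [tmul_add, map_add, ha, hb]

private lemma mu2_tmul (x : D) (w : D ⊗[k] D) :
    mu2 k D (x ⊗ₜ[k] w) = x ⊗ₜ[k] (LinearMap.mul' k D w) := by
  simp [mu2]

private lemma mu1_assoc (w : D ⊗[k] D) (y : D) :
    mu1 k D ((TensorProduct.assoc k D D D) (w ⊗ₜ[k] y)) =
      (LinearMap.mul' k D w) ⊗ₜ[k] y := by
  induction w using TensorProduct.induction_on with
  | zero =>
      rw [zero_tmul, LinearEquiv.map_zero, LinearMap.map_zero, LinearMap.map_zero, zero_tmul]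
  | tmul a b => simp [mu1]
  | add a b ha hb => simp only [add_tmul, map_add, ha, hb]

private lemma brL_tmul (bb : D →ₗ[k] D →ₗ[k] D ⊗[k] D) (β x y : D) :
    brL k D bb β (x ⊗ₜ[k] y) = (TensorProduct.assoc k D D D) ((bb β x) ⊗ₜ[k] y) := by
  simp [brL]

private lemma mu2_brL (bb : D →ₗ[k] D →ₗ[k] D ⊗[k] D) (β x y : D) :
    mu2 k D (brL k D bb β (x ⊗ₜ[k] y)) =
      LinearMap.lTensor D (LinearMap.mulRight k y) (bb β x) := by
  rw [brL_tmul]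
  induction (bb β x) using TensorProduct.induction_on with
  | zero =>
      rw [zero_tmul, LinearEquiv.map_zero, LinearMap.map_zero, LinearMap.map_zero]
  | tmul a b => simp [mu2]
  | add a b ha hb => simp only [add_tmul, map_add, ha, hb]

end TensorAux

section GradedAux
variable {k D 𝒜 d}

private lemma agree {M : Type*} [AddCommGroup M] [Module k M]
    {i j : ℤ} {t : D ⊗[k] D}
    (ht : t ∈ Submodule.span k {w : D ⊗[k] D | ∃ p q : ℤ, p + q = i + j + d ∧
      ∃ u ∈ 𝒜 p, ∃ v ∈ 𝒜 q, w = u ⊗ₜ[k] v})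
    (F G : D ⊗[k] D →ₗ[k] M)
    (h : ∀ a b : ℤ, a + b = i + j + d → ∀ u ∈ 𝒜 a, ∀ v ∈ 𝒜 b,
      F (u ⊗ₜ[k] v) = G (u ⊗ₜ[k] v)) : F t = G t := by
  refine LinearMap.eqOn_span ?_ ht
  rintro w ⟨a, b, hab, u, hu, v, hv, rfl⟩
  exact h a b hab u hu v hv

private lemma cyc3_assoc (bb : D →ₗ[k] D →ₗ[k] D ⊗[k] D)
    (cyc3 : D ⊗[k] (D ⊗[k] D) →ₗ[k] D ⊗[k] (D ⊗[k] D))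
    (hcyc3 : ∀ (i j l : ℤ) (x y z : D), x ∈ 𝒜 i → y ∈ 𝒜 j → z ∈ 𝒜 l →
      cyc3 (x ⊗ₜ[k] (y ⊗ₜ[k] z)) =
        ((-1 : k) ^ ((i + j) * l).natAbs) • (z ⊗ₜ[k] (x ⊗ₜ[k] y)))
    (hdeg : ∀ (i j : ℤ) (x y : D), x ∈ 𝒜 i → y ∈ 𝒜 j →
      bb x y ∈ Submodule.span k {w : D ⊗[k] D | ∃ p q : ℤ, p + q = i + j + d ∧
        ∃ u ∈ 𝒜 p, ∃ v ∈ 𝒜 q, w = u ⊗ₜ[k] v})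
    {b s t : ℤ} {β u v : D} (hβ : β ∈ 𝒜 b) (hu : u ∈ 𝒜 s) (hv : v ∈ 𝒜 t) :
    cyc3 ((TensorProduct.assoc k D D D) ((bb β u) ⊗ₜ[k] v)) =
      ((-1 : k) ^ ((b + s + d) * t).natAbs) • (v ⊗ₜ[k] bb β u) := by
  have key := agree (M := D ⊗[k] (D ⊗[k] D)) (hdeg b s β u hβ hu)
    (cyc3 ∘ₗ (TensorProduct.assoc k D D D).toLinearMap ∘ₗ
      (TensorProduct.mk k (D ⊗[k] D) D).flip v)
    (((-1 : k) ^ ((b + s + d) * t).natAbs) • (TensorProduct.mk k D (D ⊗[k] D) v))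
    ?_
  · simpa using key
  · rintro a b' hab e he f hf
    simp only [LinearMap.comp_apply, LinearMap.flip_apply, TensorProduct.mk_apply,
      LinearMap.smul_apply, LinearEquiv.coe_coe, TensorProduct.assoc_tmul]
    rw [hcyc3 a b' t e f v he hf hv, hab]

end GradedAux

/-- in a double Gerstenhaber algebra of degree `d`, the
associated bracket `{α,β} = m({{α,β}})` satisfies the graded Loday–Leibniz
identity. -/
theorem double_gerstenhaber_assoc_bracket_loday
    (bb : D →ₗ[k] D →ₗ[k] D ⊗[k] D)
    -- `σ_(12)`, the graded flip of `D ⊗ D`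
    (σ : D ⊗[k] D →ₗ[k] D ⊗[k] D)
    (hσ : ∀ (i j : ℤ) (x y : D), x ∈ 𝒜 i → y ∈ 𝒜 j →
      σ (x ⊗ₜ[k] y) = ((-1 : k) ^ (i * j).natAbs) • (y ⊗ₜ[k] x))
    -- `σ_(123)`, the graded cyclic permutation of `D ⊗ D ⊗ D`
    (cyc3 : D ⊗[k] (D ⊗[k] D) →ₗ[k] D ⊗[k] (D ⊗[k] D))
    (hcyc3 : ∀ (i j l : ℤ) (x y z : D), x ∈ 𝒜 i → y ∈ 𝒜 j → z ∈ 𝒜 l →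
      cyc3 (x ⊗ₜ[k] (y ⊗ₜ[k] z)) =
        ((-1 : k) ^ ((i + j) * l).natAbs) • (z ⊗ₜ[k] (x ⊗ₜ[k] y)))
    -- `{{-,-}}` has degree `d`
    (hdeg : ∀ (i j : ℤ) (x y : D), x ∈ 𝒜 i → y ∈ 𝒜 j →
      bb x y ∈ Submodule.span k {w : D ⊗[k] D | ∃ p q : ℤ, p + q = i + j + d ∧
        ∃ u ∈ 𝒜 p, ∃ v ∈ 𝒜 q, w = u ⊗ₜ[k] v})
    -- graded Leibniz rule in the second argument for the outer structure
    (hleib : ∀ (i j : ℤ) (α β : D), α ∈ 𝒜 i → β ∈ 𝒜 j → ∀ γ : D,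
      bb α (β * γ) =
        ((-1 : k) ^ ((i + d) * j).natAbs) •
            LinearMap.rTensor D (LinearMap.mulLeft k β) (bb α γ)
          + LinearMap.lTensor D (LinearMap.mulRight k γ) (bb α β))
    -- graded antisymmetry
    (hskew : ∀ (i j : ℤ) (α β : D), α ∈ 𝒜 i → β ∈ 𝒜 j →
      bb α β = - ((-1 : k) ^ ((i + d) * (j + d)).natAbs) • σ (bb β α))
    -- graded double Jacobi identity
    (hjac : ∀ (i j l : ℤ) (α β γ : D), α ∈ 𝒜 i → β ∈ 𝒜 j → γ ∈ 𝒜 l →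
      brL k D bb α (bb β γ)
        + ((-1 : k) ^ ((i + d) * (j + l)).natAbs) • cyc3 (brL k D bb β (bb γ α))
        + ((-1 : k) ^ ((l + d) * (i + j)).natAbs) •
            cyc3 (cyc3 (brL k D bb γ (bb α β))) = 0) :
    ∀ (p q r : ℤ) (α β γ : D), α ∈ 𝒜 p → β ∈ 𝒜 q → γ ∈ 𝒜 r →
    ∀ act : D ⊗[k] D →ₗ[k] D ⊗[k] D,
      (∀ (i : ℤ) (x y : D), x ∈ 𝒜 i →
        act (x ⊗ₜ[k] y) = (LinearMap.mul' k D (bb α x)) ⊗ₜ[k] y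
          + ((-1 : k) ^ ((p + d) * i).natAbs) •
              (x ⊗ₜ[k] LinearMap.mul' k D (bb α y))) →
      act (bb β γ) = bb (LinearMap.mul' k D (bb α β)) γ
        + ((-1 : k) ^ ((p + d) * (q + d)).natAbs) •
            bb β (LinearMap.mul' k D (bb α γ)) := by
  intro p q r α β γ hα hβ hγ act hact
  -- Step E0 : act (bb β γ) = A + Bv
  have E0 : act (bb β γ) = mu1 k D (brL k D bb α (bb β γ))
      + mu2 k D (cyc3 (brL k D bb α (σ (bb β γ)))) := by
    have key := agree (hdeg q r β γ hβ hγ) act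
      (mu1 k D ∘ₗ brL k D bb α + mu2 k D ∘ₗ cyc3 ∘ₗ brL k D bb α ∘ₗ σ) ?_
    · simpa using key
    · rintro i j hij x hx y hy
      simp only [LinearMap.add_apply, LinearMap.comp_apply]
      rw [hact i x y hx, brL_tmul, mu1_assoc,
        hσ i j x y hx hy, map_smul, brL_tmul, map_smul,
        cyc3_assoc bb cyc3 hcyc3 hdeg hα hy hx, map_smul, map_smul, mu2_tmul,
        smul_smul, sgn_mul]
      rw [show ((-1:k) ^ (i * j + (p + j + d) * i).natAbs)
          = ((-1:k) ^ ((p + d) * i).natAbs) from sgn_congr k ⟨i*j, by ring⟩]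
  -- Step E4 : bb β {α,γ} = T2 + TA
  have E4 : bb β (LinearMap.mul' k D (bb α γ)) =
      mu1 k D (cyc3 (brL k D bb β (σ (bb α γ)))) + mu2 k D (brL k D bb β (bb α γ)) := by
    have key := agree (hdeg p r α γ hα hγ)
      ((bb β) ∘ₗ LinearMap.mul' k D)
      (mu1 k D ∘ₗ cyc3 ∘ₗ brL k D bb β ∘ₗ σ + mu2 k D ∘ₗ brL k D bb β) ?_
    · simpa using key
    · rintro a b hab u hu v hv
      simp only [LinearMap.add_apply, LinearMap.comp_apply, LinearMap.mul'_apply]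
      rw [hleib q a β u hβ hu v, mu2_brL,
        hσ a b u v hu hv, map_smul, brL_tmul, map_smul,
        cyc3_assoc bb cyc3 hcyc3 hdeg hβ hv hu, map_smul, map_smul, mu1_tmul,
        smul_smul, sgn_mul]
      congr 2
      exact (sgn_congr k ⟨a*b, by ring⟩).symm
  -- Step E5 : bb {α,β} γ = -(e2 • (T3 + TC))
  have E5 : bb (LinearMap.mul' k D (bb α β)) γ =
      -(((-1 : k) ^ ((r+d)*(p+q)).natAbs) •
        (mu1 k D (cyc3 (cyc3 (brL k D bb γ (bb α β))))
          + mu2 k D (cyc3 (cyc3 (brL k D bb γ (σ (bb α β))))))) := by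
    have key := agree (hdeg p q α β hα hβ)
      ((LinearMap.flip bb γ) ∘ₗ LinearMap.mul' k D)
      (-(((-1 : k) ^ ((r+d)*(p+q)).natAbs) •
        (mu1 k D ∘ₗ cyc3 ∘ₗ cyc3 ∘ₗ brL k D bb γ
          + mu2 k D ∘ₗ cyc3 ∘ₗ cyc3 ∘ₗ brL k D bb γ ∘ₗ σ))) ?_
    · simpa using key
    · rintro s t hst u hu v hv
      simp only [LinearMap.add_apply, LinearMap.comp_apply, LinearMap.mul'_apply,
        LinearMap.neg_apply, LinearMap.smul_apply, LinearMap.flip_apply]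
      -- expand the left side
      rw [hskew (s+t) r (u*v) γ (SetLike.mul_mem_graded hu hv) hγ,
        hleib r s γ u hγ hu v, map_add, map_smul]
      -- the two halves
      have suba : σ (LinearMap.lTensor D (LinearMap.mulRight k v) (bb γ u)) =
          mu1 k D (cyc3 (cyc3 ((TensorProduct.assoc k D D D) ((bb γ u) ⊗ₜ[k] v)))) := by
        have key2 := agree (hdeg r s γ u hγ hu)
          (σ ∘ₗ LinearMap.lTensor D (LinearMap.mulRight k v))
          (mu1 k D ∘ₗ cyc3 ∘ₗ cyc3 ∘ₗ (TensorProduct.assoc k D D D).toLinearMap ∘ₗ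
            (TensorProduct.mk k (D ⊗[k] D) D).flip v) ?_
        · simpa using key2
        · rintro g h hgh e₁ he f₁ hf
          simp only [LinearMap.comp_apply, LinearMap.flip_apply, TensorProduct.mk_apply,
            LinearEquiv.coe_coe, TensorProduct.assoc_tmul, LinearMap.lTensor_tmul,
            LinearMap.mulRight_apply]
          rw [hσ g (h+t) e₁ (f₁*v) he (SetLike.mul_mem_graded hf hv),
            hcyc3 g h t e₁ f₁ v he hf hv, map_smul,
            hcyc3 t g h v e₁ f₁ hv he hf, map_smul, map_smul, mu1_tmul,
            smul_smul, sgn_mul]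
          simp only [LinearMap.rTensor_tmul, LinearMap.mulLeft_apply]
          congr 1
          exact sgn_congr k ⟨-(h*t), by ring⟩
      have subb : σ (LinearMap.rTensor D (LinearMap.mulLeft k u) (bb γ v)) =
          ((-1 : k) ^ ((r+t+d)*s).natAbs) •
            mu2 k D (cyc3 (cyc3 ((TensorProduct.assoc k D D D) ((bb γ v) ⊗ₜ[k] u)))) := by
        have key2 := agree (hdeg r t γ v hγ hv)
          (σ ∘ₗ LinearMap.rTensor D (LinearMap.mulLeft k u))
          (((-1 : k) ^ ((r+t+d)*s).natAbs) •
            (mu2 k D ∘ₗ cyc3 ∘ₗ cyc3 ∘ₗ (TensorProduct.assoc k D D D).toLinearMap ∘ₗ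
              (TensorProduct.mk k (D ⊗[k] D) D).flip u)) ?_
        · simpa using key2
        · rintro g₂ h₂ hgh e₂ he f₂ hf
          simp only [LinearMap.comp_apply, LinearMap.flip_apply, TensorProduct.mk_apply,
            LinearMap.smul_apply, LinearEquiv.coe_coe, TensorProduct.assoc_tmul,
            LinearMap.rTensor_tmul, LinearMap.mulLeft_apply]
          rw [hσ (s+g₂) h₂ (u*e₂) f₂ (SetLike.mul_mem_graded hu he) hf,
            hcyc3 g₂ h₂ s e₂ f₂ u he hf hu, map_smul,
            hcyc3 s g₂ h₂ u e₂ f₂ hu he hf, map_smul, map_smul, mu2_tmul,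
            smul_smul, smul_smul, sgn_mul, sgn_mul]
          simp only [LinearMap.mul'_apply]
          congr 1
          obtain rfl : h₂ = r + t + d - g₂ := by omega
          exact (sgn_congr k ⟨(r+t+d)*s, by ring⟩).symm
      rw [suba, subb,
        hσ s t u v hu hv, map_smul, brL_tmul, brL_tmul, map_smul, map_smul, map_smul]
      -- now purely a sign computation
      obtain rfl : t = p + q + d - s := by omega
      rw [smul_smul, sgn_mul]
      simp only [smul_add, smul_smul, neg_smul, smul_neg, neg_mul, neg_add, sgn_mul]
      rw [show ((-1:k) ^ ((s + (p + q + d - s) + d) * (r + d)).natAbs)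
            = ((-1:k) ^ ((r+d)*(p+q)).natAbs) from sgn_congr k ⟨d*(r+d), by ring⟩,
          show ((-1:k) ^ ((s + (p + q + d - s) + d) * (r + d)
              + ((r + d) * s + (r + (p + q + d - s) + d) * s)).natAbs)
            = ((-1:k) ^ ((r+d)*(p+q) + s*(p+q+d-s)).natAbs) from
              sgn_congr k ⟨d*r+d*d+r*s+d*s, by ring⟩]
      abel
  -- Jacobi identity, multiplied in the first two slots
  have hF1 := congrArg (mu1 k D) (hjac p q r α β γ hα hβ hγ)
  rw [hskew r p γ α hγ hα] at hF1
  simp only [map_add, map_smul, map_neg, map_zero, smul_neg, smul_smul, sgn_mul,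
    neg_smul, mul_neg] at hF1
  -- Jacobi identity (for β α γ), multiplied in the last two slots and scaled
  have hF2 := congrArg (fun z => ((-1:k)^((p+d)*(q+d)).natAbs) • mu2 k D z)
    (hjac q p r β α γ hβ hα hγ)
  rw [hskew r q γ β hγ hβ, hskew q p β α hβ hα] at hF2
  simp only [map_add, map_smul, map_neg, map_zero, smul_neg, smul_smul, sgn_mul,
    neg_smul, mul_neg, smul_add, smul_zero] at hF2
  rw [show ((-1:k) ^ ((p + d) * (q + r) + (r + d) * (p + d)).natAbs)
      = ((-1:k) ^ ((p + d) * (q + d)).natAbs) from sgn_congr k ⟨p*r+r*d, by ring⟩] at hF1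
  rw [show ((-1:k) ^ ((p + d) * (q + d) + ((q + d) * (p + r) + (r + d) * (q + d))).natAbs)
      = (1:k) from sgn_one k ⟨p*q+p*d+d*q+d*d+q*r+d*r, by ring⟩, one_smul] at hF2
  rw [show ((-1:k) ^ ((p + d) * (q + d) + ((r + d) * (q + p) + (q + d) * (p + d))).natAbs)
      = ((-1:k) ^ ((r + d) * (p + q)).natAbs) from sgn_congr k ⟨(p+d)*(q+d), by ring⟩] at hF2
  rw [E0, E5, E4, ← sub_eq_zero]
  rw [show (mu1 k D (brL k D bb α (bb β γ)) + mu2 k D (cyc3 (brL k D bb α (σ (bb β γ)))))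
        - (-(((-1:k) ^ ((r+d)*(p+q)).natAbs) •
            (mu1 k D (cyc3 (cyc3 (brL k D bb γ (bb α β))))
              + mu2 k D (cyc3 (cyc3 (brL k D bb γ (σ (bb α β)))))))
          + ((-1:k) ^ ((p + d) * (q + d)).natAbs) •
            (mu1 k D (cyc3 (brL k D bb β (σ (bb α γ)))) + mu2 k D (brL k D bb β (bb α γ))))
      = (mu1 k D (brL k D bb α (bb β γ))
          + -(((-1:k) ^ ((p + d) * (q + d)).natAbs) •
              mu1 k D (cyc3 (brL k D bb β (σ (bb α γ)))))
          + ((-1:k) ^ ((r + d) * (p + q)).natAbs) •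
              mu1 k D (cyc3 (cyc3 (brL k D bb γ (bb α β)))))
        - (((-1:k) ^ ((p + d) * (q + d)).natAbs) • mu2 k D (brL k D bb β (bb α γ))
          + -(mu2 k D (cyc3 (brL k D bb α (σ (bb β γ)))))
          + -(((-1:k) ^ ((r + d) * (p + q)).natAbs) •
              mu2 k D (cyc3 (cyc3 (brL k D bb γ (σ (bb α β))))))) from by module]
  rw [hF1, hF2, sub_zero]
end

section
/- Let D be a double Gerstenhaber algebra of degree d. Then the associated bracket {α,β} = m({{α,β}}) induces on the quotient (D/[D,D])[d] (degree shift by d) a graded Lie algebra structure: the induced bracket is well-defined on the quotient by graded commutators, is graded antisymmetric, and satisfies the graded Jacobi identity. -/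
set_option linter.unusedSectionVars false
set_option maxHeartbeats 1000000
set_option synthInstance.maxHeartbeats 200000

open TensorProduct

variable (k : Type*) [Field k] [CharZero k]
  (D : Type*) [Ring D] [Algebra k D]
  (𝒜 : ℤ → Submodule k D) [GradedAlgebra 𝒜] (d : ℤ)

section Signs
lemma negpow_even {n : ℤ} (h : Even n) : ((-1 : k) ^ n.natAbs) = 1 :=
  (Int.natAbs_even.mpr h).neg_one_pow
lemma negpow_odd {n : ℤ} (h : Odd n) : ((-1 : k) ^ n.natAbs) = -1 :=
  (Int.natAbs_odd.mpr h).neg_one_pow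
lemma negpow_congr {a b : ℤ} (h : a % 2 = b % 2) :
    ((-1 : k) ^ a.natAbs) = ((-1 : k) ^ b.natAbs) := by
  rcases Int.even_or_odd a with ha | ha
  · have hb : Even b := by rw [Int.even_iff] at *; omega
    rw [negpow_even k ha, negpow_even k hb]
  · have hb : Odd b := by rw [Int.odd_iff] at *; omega
    rw [negpow_odd k ha, negpow_odd k hb]
lemma negpow_add (a b : ℤ) :
    ((-1 : k) ^ a.natAbs) * ((-1 : k) ^ b.natAbs) = ((-1 : k) ^ (a + b).natAbs) := by
  rcases Int.even_or_odd a with ha | ha <;> rcases Int.even_or_odd b with hb | hb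
  · rw [negpow_even k ha, negpow_even k hb, negpow_even k (ha.add hb), one_mul]
  · rw [negpow_even k ha, negpow_odd k hb, negpow_odd k (Even.add_odd ha hb), one_mul]
  · rw [negpow_odd k ha, negpow_even k hb, negpow_odd k (Odd.add_even ha hb), mul_one]
  · rw [negpow_odd k ha, negpow_odd k hb, negpow_even k (Odd.add_odd ha hb)]; ring
lemma negpow_congr' {a b : ℤ} (t : ℤ) (h : a - b = 2 * t) :
    ((-1 : k) ^ a.natAbs) = ((-1 : k) ^ b.natAbs) :=
  negpow_congr k (by omega)
lemma negpow_sq (a : ℤ) :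
    ((-1 : k) ^ a.natAbs) * ((-1 : k) ^ a.natAbs) = 1 := by
  rcases Int.even_or_odd a with ha | ha
  · rw [negpow_even k ha]; ring
  · rw [negpow_odd k ha]; ring
end Signs

/-- the span of graded commutators `[D,D]`. -/
def gradedComm : Submodule k D :=
  Submodule.span k {x : D | ∃ (i j : ℤ) (u v : D), u ∈ 𝒜 i ∧ v ∈ 𝒜 j ∧
    x = u * v - ((-1 : k) ^ (i * j).natAbs) • (v * u)}

/-- span of graded pure tensors with total degree `n` -/
def G2 (n : ℤ) : Submodule k (D ⊗[k] D) :=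
  Submodule.span k {w : D ⊗[k] D | ∃ p q : ℤ, p + q = n ∧
    ∃ u ∈ 𝒜 p, ∃ v ∈ 𝒜 q, w = u ⊗ₜ[k] v}

/-- span of graded pure triples -/
def G3 : Submodule k (D ⊗[k] (D ⊗[k] D)) :=
  Submodule.span k {w : D ⊗[k] (D ⊗[k] D) | ∃ (i j l : ℤ), ∃ x ∈ 𝒜 i, ∃ y ∈ 𝒜 j,
    ∃ z ∈ 𝒜 l, w = x ⊗ₜ[k] (y ⊗ₜ[k] z)}

noncomputable def m3 : D ⊗[k] (D ⊗[k] D) →ₗ[k] D :=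
  (LinearMap.mul' k D) ∘ₗ LinearMap.lTensor D (LinearMap.mul' k D)

lemma m3_tmul (x y z : D) : m3 k D (x ⊗ₜ[k] (y ⊗ₜ[k] z)) = x * (y * z) := by
  simp [m3]

section Helpers
variable {k D}

/-- pointwise equality of linear maps on a span -/
lemma eq_on_span {M N : Type*} [AddCommGroup M] [AddCommGroup N] [Module k M] [Module k N]
    {s : Set M} {f g : M →ₗ[k] N} (h : ∀ x ∈ s, f x = g x) :
    ∀ x ∈ Submodule.span k s, f x = g x := by
  intro x hx
  induction hx using Submodule.span_induction with
  | mem x hx => exact h x hx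
  | zero => simp
  | add x y _ _ hx hy => simp [hx, hy]
  | smul a x _ hx => simp [hx]

lemma comm_mem {i j : ℤ} {u v : D} (hu : u ∈ 𝒜 i) (hv : v ∈ 𝒜 j) :
    u * v - ((-1 : k) ^ (i * j).natAbs) • (v * u) ∈ gradedComm k D 𝒜 :=
  Submodule.subset_span ⟨i, j, u, v, hu, hv, rfl⟩

/-- swap lemma in the quotient -/
lemma swapQ {i j : ℤ} {u v : D} (hu : u ∈ 𝒜 i) (hv : v ∈ 𝒜 j) :
    (gradedComm k D 𝒜).mkQ (u * v) =
      ((-1 : k) ^ (i * j).natAbs) • (gradedComm k D 𝒜).mkQ (v * u) := by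
  have h := comm_mem 𝒜 hu hv
  rw [← Submodule.Quotient.mk_eq_zero (gradedComm k D 𝒜)] at h
  have : (gradedComm k D 𝒜).mkQ (u * v - ((-1 : k) ^ (i * j).natAbs) • (v * u)) = 0 := h
  rw [map_sub, map_smul, sub_eq_zero] at this
  exact this

lemma mem_G2_of_hdeg {n : ℤ} {w : D ⊗[k] D}
    (h : w ∈ Submodule.span k {w : D ⊗[k] D | ∃ p q : ℤ, p + q = n ∧
      ∃ u ∈ 𝒜 p, ∃ v ∈ 𝒜 q, w = u ⊗ₜ[k] v}) : w ∈ G2 k D 𝒜 n := h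

lemma grade_of_mem_G2 {n : ℤ} {w : D ⊗[k] D} (h : w ∈ G2 k D 𝒜 n) :
    LinearMap.mul' k D w ∈ 𝒜 n := by
  have : G2 k D 𝒜 n ≤ (𝒜 n).comap (LinearMap.mul' k D) := by
    rw [G2, Submodule.span_le]
    rintro w ⟨p, q, hpq, u, hu, v, hv, rfl⟩
    simpa [hpq] using SetLike.mul_mem_graded hu hv
  exact this h

lemma mU_rT (β : D) (w : D ⊗[k] D) :
    LinearMap.mul' k D (LinearMap.rTensor D (LinearMap.mulLeft k β) w) =
    β * LinearMap.mul' k D w := by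
  induction w using TensorProduct.induction_on with
  | zero => simp
  | tmul u v => simp [mul_assoc]
  | add x y hx hy => simp [mul_add, hx, hy]

lemma mU_lT (γ : D) (w : D ⊗[k] D) :
    LinearMap.mul' k D (LinearMap.lTensor D (LinearMap.mulRight k γ) w) =
    LinearMap.mul' k D w * γ := by
  induction w using TensorProduct.induction_on with
  | zero => simp
  | tmul u v => simp [mul_assoc]
  | add x y hx hy => simp [add_mul, hx, hy]

lemma m3_assoc (v : D) (ω : D ⊗[k] D) :
    m3 k D ((TensorProduct.assoc k D D D).toLinearMap (ω ⊗ₜ[k] v)) =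
    LinearMap.mul' k D ω * v := by
  induction ω using TensorProduct.induction_on with
  | zero => rw [zero_tmul, map_zero, map_zero, map_zero, zero_mul]
  | tmul x y => simp [m3, mul_assoc]
  | add x y hx hy => rw [add_tmul, map_add, map_add, map_add, add_mul, hx, hy]
end Helpers
noncomputable def piQ : D →ₗ[k] D ⧸ gradedComm k D 𝒜 := (gradedComm k D 𝒜).mkQ

lemma piQ_eq_zero {x : D} : piQ k D 𝒜 x = 0 ↔ x ∈ gradedComm k D 𝒜 := by
  rw [piQ, Submodule.mkQ_apply, Submodule.Quotient.mk_eq_zero]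

section Bracket
variable {k D 𝒜 d}
variable {bb : D →ₗ[k] D →ₗ[k] D ⊗[k] D}
variable {σ : D ⊗[k] D →ₗ[k] D ⊗[k] D}

/-- swap lemma in the quotient, piQ version -/
lemma swapQ' {i j : ℤ} {u v : D} (hu : u ∈ 𝒜 i) (hv : v ∈ 𝒜 j) :
    piQ k D 𝒜 (u * v) = ((-1 : k) ^ (i * j).natAbs) • piQ k D 𝒜 (v * u) :=
  swapQ 𝒜 hu hv

/-- Leibniz rule in product form -/
lemma leib_mul
    (hleib : ∀ (i j : ℤ) (α β : D), α ∈ 𝒜 i → β ∈ 𝒜 j → ∀ γ : D,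
      bb α (β * γ) =
        ((-1 : k) ^ ((i + d) * j).natAbs) •
            LinearMap.rTensor D (LinearMap.mulLeft k β) (bb α γ)
          + LinearMap.lTensor D (LinearMap.mulRight k γ) (bb α β))
    {i j : ℤ} {α β : D} (hα : α ∈ 𝒜 i) (hβ : β ∈ 𝒜 j) (γ : D) :
    LinearMap.mul' k D (bb α (β * γ)) =
      ((-1 : k) ^ ((i + d) * j).natAbs) • (β * LinearMap.mul' k D (bb α γ))
        + LinearMap.mul' k D (bb α β) * γ := by
  rw [hleib i j α β hα hβ γ, map_add, map_smul, mU_rT, mU_lT]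

/-- multiplication composed with σ agrees with multiplication, mod commutators -/
lemma mσ_Q
    (hσ : ∀ (i j : ℤ) (x y : D), x ∈ 𝒜 i → y ∈ 𝒜 j →
      σ (x ⊗ₜ[k] y) = ((-1 : k) ^ (i * j).natAbs) • (y ⊗ₜ[k] x))
    {n : ℤ} {w : D ⊗[k] D} (hw : w ∈ G2 k D 𝒜 n) :
    piQ k D 𝒜 (LinearMap.mul' k D (σ w)) = piQ k D 𝒜 (LinearMap.mul' k D w) := by
  have := eq_on_span (s := {w : D ⊗[k] D | ∃ p q : ℤ, p + q = n ∧
      ∃ u ∈ 𝒜 p, ∃ v ∈ 𝒜 q, w = u ⊗ₜ[k] v})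
    (f := piQ k D 𝒜 ∘ₗ LinearMap.mul' k D ∘ₗ σ)
    (g := piQ k D 𝒜 ∘ₗ LinearMap.mul' k D) ?_ w hw
  · simpa using this
  · rintro w ⟨p, q, hpq, u, hu, v, hv, rfl⟩
    simp only [LinearMap.comp_apply, hσ p q u v hu hv, map_smul, LinearMap.mul'_apply]
    rw [swapQ' hv hu, smul_smul, negpow_congr k (a := q * p) (b := p * q) (by ring_nf),
      negpow_sq, one_smul]

/-- σ is involutive on graded spans -/
lemma σσ_eq
    (hσ : ∀ (i j : ℤ) (x y : D), x ∈ 𝒜 i → y ∈ 𝒜 j →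
      σ (x ⊗ₜ[k] y) = ((-1 : k) ^ (i * j).natAbs) • (y ⊗ₜ[k] x))
    {n : ℤ} {w : D ⊗[k] D} (hw : w ∈ G2 k D 𝒜 n) :
    σ (σ w) = w := by
  have := eq_on_span (s := {w : D ⊗[k] D | ∃ p q : ℤ, p + q = n ∧
      ∃ u ∈ 𝒜 p, ∃ v ∈ 𝒜 q, w = u ⊗ₜ[k] v})
    (f := σ ∘ₗ σ) (g := LinearMap.id) ?_ w hw
  · simpa using this
  · rintro w ⟨p, q, hpq, u, hu, v, hv, rfl⟩
    simp only [LinearMap.comp_apply, hσ p q u v hu hv, map_smul, hσ q p v u hv hu,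
      LinearMap.id_apply]
    rw [smul_smul, negpow_congr k (a := q * p) (b := p * q) (by ring_nf), negpow_sq, one_smul]

end Bracket
section Bracket2
variable {k : Type*} [Field k] [CharZero k]
  {D : Type*} [Ring D] [Algebra k D]
  {𝒜 : ℤ → Submodule k D} [GradedAlgebra 𝒜] {d : ℤ}
variable {bb : D →ₗ[k] D →ₗ[k] D ⊗[k] D}
variable {σ : D ⊗[k] D →ₗ[k] D ⊗[k] D}
variable (hσ : ∀ (i j : ℤ) (x y : D), x ∈ 𝒜 i → y ∈ 𝒜 j →
      σ (x ⊗ₜ[k] y) = ((-1 : k) ^ (i * j).natAbs) • (y ⊗ₜ[k] x))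
variable (hdeg : ∀ (i j : ℤ) (x y : D), x ∈ 𝒜 i → y ∈ 𝒜 j →
      bb x y ∈ Submodule.span k {w : D ⊗[k] D | ∃ p q : ℤ, p + q = i + j + d ∧
        ∃ u ∈ 𝒜 p, ∃ v ∈ 𝒜 q, w = u ⊗ₜ[k] v})
variable (hleib : ∀ (i j : ℤ) (α β : D), α ∈ 𝒜 i → β ∈ 𝒜 j → ∀ γ : D,
      bb α (β * γ) =
        ((-1 : k) ^ ((i + d) * j).natAbs) •
            LinearMap.rTensor D (LinearMap.mulLeft k β) (bb α γ)
          + LinearMap.lTensor D (LinearMap.mulRight k γ) (bb α β))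
variable (hskew : ∀ (i j : ℤ) (α β : D), α ∈ 𝒜 i → β ∈ 𝒜 j →
      bb α β = - ((-1 : k) ^ ((i + d) * (j + d)).natAbs) • σ (bb β α))

include hdeg in
lemma bb_mem_G2 {i j : ℤ} {α β : D} (hα : α ∈ 𝒜 i) (hβ : β ∈ 𝒜 j) :
    bb α β ∈ G2 k D 𝒜 (i + j + d) := hdeg i j α β hα hβ

include hdeg in
lemma br_grade {i j : ℤ} {α β : D} (hα : α ∈ 𝒜 i) (hβ : β ∈ 𝒜 j) :
    LinearMap.mul' k D (bb α β) ∈ 𝒜 (i + j + d) :=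
  grade_of_mem_G2 𝒜 (bb_mem_G2 hdeg hα hβ)

include hσ hdeg hskew in
lemma σ_bb {i j : ℤ} {α β : D} (hα : α ∈ 𝒜 i) (hβ : β ∈ 𝒜 j) :
    σ (bb α β) = - ((-1 : k) ^ ((i + d) * (j + d)).natAbs) • bb β α := by
  rw [hskew i j α β hα hβ, map_smul, σσ_eq hσ (bb_mem_G2 hdeg hβ hα)]

include hdeg hleib in
/-- `{γ, uv} = (-1)^{ij} {γ, vu}` mod commutators, for graded `γ u v`. -/
lemma part1_core {c i j : ℤ} {γ u v : D} (hγ : γ ∈ 𝒜 c) (hu : u ∈ 𝒜 i) (hv : v ∈ 𝒜 j) :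
    piQ k D 𝒜 (LinearMap.mul' k D (bb γ (u * v))) =
      ((-1 : k) ^ (i * j).natAbs) •
        piQ k D 𝒜 (LinearMap.mul' k D (bb γ (v * u))) := by
  have hA : LinearMap.mul' k D (bb γ u) ∈ 𝒜 (c + i + d) := br_grade hdeg hγ hu
  have hB : LinearMap.mul' k D (bb γ v) ∈ 𝒜 (c + j + d) := br_grade hdeg hγ hv
  rw [leib_mul hleib hγ hu v, leib_mul hleib hγ hv u]
  rw [map_add, map_add, map_smul, map_smul]
  rw [swapQ' hu hB, swapQ' hA hv]
  rw [smul_smul, smul_add, smul_smul]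
  have h1 : ((-1 : k) ^ ((c + d) * i).natAbs) * ((-1 : k) ^ (i * (c + j + d)).natAbs)
      = ((-1 : k) ^ (i * j).natAbs) := by
    rw [negpow_add]
    exact negpow_congr' k (i * (c + d)) (by ring)
  have h2 : ((-1 : k) ^ ((c + i + d) * j).natAbs)
      = ((-1 : k) ^ (i * j).natAbs) * ((-1 : k) ^ ((c + d) * j).natAbs) := by
    rw [negpow_add]
    exact negpow_congr' k 0 (by ring)
  rw [h1, h2]
  exact add_comm _ _

end Bracket2
section Bracket3
variable {k : Type*} [Field k] [CharZero k]
  {D : Type*} [Ring D] [Algebra k D]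
  {𝒜 : ℤ → Submodule k D} [GradedAlgebra 𝒜] {d : ℤ}
variable {bb : D →ₗ[k] D →ₗ[k] D ⊗[k] D}
variable {σ : D ⊗[k] D →ₗ[k] D ⊗[k] D}
variable {cyc3 : D ⊗[k] (D ⊗[k] D) →ₗ[k] D ⊗[k] (D ⊗[k] D)}
variable (hσ : ∀ (i j : ℤ) (x y : D), x ∈ 𝒜 i → y ∈ 𝒜 j →
      σ (x ⊗ₜ[k] y) = ((-1 : k) ^ (i * j).natAbs) • (y ⊗ₜ[k] x))
variable (hcyc3 : ∀ (i j l : ℤ) (x y z : D), x ∈ 𝒜 i → y ∈ 𝒜 j → z ∈ 𝒜 l →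
      cyc3 (x ⊗ₜ[k] (y ⊗ₜ[k] z)) =
        ((-1 : k) ^ ((i + j) * l).natAbs) • (z ⊗ₜ[k] (x ⊗ₜ[k] y)))
variable (hdeg : ∀ (i j : ℤ) (x y : D), x ∈ 𝒜 i → y ∈ 𝒜 j →
      bb x y ∈ Submodule.span k {w : D ⊗[k] D | ∃ p q : ℤ, p + q = i + j + d ∧
        ∃ u ∈ 𝒜 p, ∃ v ∈ 𝒜 q, w = u ⊗ₜ[k] v})
variable (hleib : ∀ (i j : ℤ) (α β : D), α ∈ 𝒜 i → β ∈ 𝒜 j → ∀ γ : D,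
      bb α (β * γ) =
        ((-1 : k) ^ ((i + d) * j).natAbs) •
            LinearMap.rTensor D (LinearMap.mulLeft k β) (bb α γ)
          + LinearMap.lTensor D (LinearMap.mulRight k γ) (bb α β))
variable (hskew : ∀ (i j : ℤ) (α β : D), α ∈ 𝒜 i → β ∈ 𝒜 j →
      bb α β = - ((-1 : k) ^ ((i + d) * (j + d)).natAbs) • σ (bb β α))

/-- reduction of statements about all of `D` to graded pieces -/
lemma key_iSup (S : Submodule k D) (h : ∀ c : ℤ, 𝒜 c ≤ S) : ∀ γ : D, γ ∈ S := by
  intro γ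
  have h2 : (⊤ : Submodule k D) ≤ S := by
    rw [← (DirectSum.Decomposition.isInternal 𝒜).submodule_iSup_eq_top]
    exact iSup_le h
  exact h2 Submodule.mem_top

include hdeg hleib in
lemma part1_gen_right {c i j : ℤ} {γ u v : D} (hγ : γ ∈ 𝒜 c) (hu : u ∈ 𝒜 i) (hv : v ∈ 𝒜 j) :
    piQ k D 𝒜 (LinearMap.mul' k D
      (bb γ (u * v - ((-1 : k) ^ (i * j).natAbs) • (v * u)))) = 0 := by
  rw [map_sub, map_smul, map_sub, map_smul, map_sub, map_smul,
    part1_core hdeg hleib hγ hu hv, sub_self]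

include hdeg hleib in
/-- `{γ, x} ∈ [D,D]` for `x ∈ [D,D]` -/
lemma part1_right (x : D) (hx : x ∈ gradedComm k D 𝒜) (γ : D) :
    piQ k D 𝒜 (LinearMap.mul' k D (bb γ x)) = 0 := by
  refine eq_on_span (f := piQ k D 𝒜 ∘ₗ LinearMap.mul' k D ∘ₗ bb γ) (g := 0) ?_ x hx
  rintro x ⟨i, j, u, v, hu, hv, rfl⟩
  simp only [LinearMap.comp_apply, LinearMap.zero_apply]
  -- generalize γ over all of D
  refine key_iSup (𝒜 := 𝒜) (S := LinearMap.ker (piQ k D 𝒜 ∘ₗ LinearMap.mul' k D ∘ₗ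
    bb.flip (u * v - ((-1 : k) ^ (i * j).natAbs) • (v * u)))) ?_ γ
  intro c γ' hγ'
  simp only [LinearMap.mem_ker, LinearMap.comp_apply, LinearMap.flip_apply]
  exact part1_gen_right hdeg hleib hγ' hu hv

include hσ hdeg hleib hskew in
/-- `{x, γ} ∈ [D,D]` for `x ∈ [D,D]` -/
lemma part1_left (x : D) (hx : x ∈ gradedComm k D 𝒜) (γ : D) :
    piQ k D 𝒜 (LinearMap.mul' k D (bb x γ)) = 0 := by
  refine eq_on_span (f := piQ k D 𝒜 ∘ₗ LinearMap.mul' k D ∘ₗ bb.flip γ) (g := 0) ?_ x hx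
  rintro x ⟨i, j, u, v, hu, hv, rfl⟩
  simp only [LinearMap.comp_apply, LinearMap.zero_apply, LinearMap.flip_apply]
  set x := u * v - ((-1 : k) ^ (i * j).natAbs) • (v * u) with hxdef
  have hxmem : x ∈ 𝒜 (i + j) := by
    refine Submodule.sub_mem _ (SetLike.mul_mem_graded hu hv) (Submodule.smul_mem _ _ ?_)
    have := SetLike.mul_mem_graded hv hu
    rwa [add_comm j i] at this
  have hxcomm : x ∈ gradedComm k D 𝒜 := comm_mem 𝒜 hu hv
  -- generalize γ over all of D
  refine key_iSup (𝒜 := 𝒜) (S := LinearMap.ker (piQ k D 𝒜 ∘ₗ LinearMap.mul' k D ∘ₗ bb x)) ?_ γ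
  intro c γ' hγ'
  simp only [LinearMap.mem_ker, LinearMap.comp_apply]
  rw [hskew (i + j) c x γ' hxmem hγ', map_smul, map_smul,
    mσ_Q hσ (bb_mem_G2 hdeg hγ' hxmem),
    part1_right hdeg hleib x hxcomm γ', smul_zero]

include hσ hdeg hskew in
/-- graded antisymmetry in the quotient -/
lemma antisQ {i j : ℤ} {α β : D} (hα : α ∈ 𝒜 i) (hβ : β ∈ 𝒜 j) :
    piQ k D 𝒜 (LinearMap.mul' k D (bb α β)) =
      - ((-1 : k) ^ ((i + d) * (j + d)).natAbs) •
        piQ k D 𝒜 (LinearMap.mul' k D (bb β α)) := by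
  rw [hskew i j α β hα hβ, map_smul, map_smul, mσ_Q hσ (bb_mem_G2 hdeg hβ hα)]

end Bracket3
section Bracket4
variable {k : Type*} [Field k] [CharZero k]
  {D : Type*} [Ring D] [Algebra k D]
  {𝒜 : ℤ → Submodule k D} [GradedAlgebra 𝒜] {d : ℤ}
variable {bb : D →ₗ[k] D →ₗ[k] D ⊗[k] D}
variable {σ : D ⊗[k] D →ₗ[k] D ⊗[k] D}
variable {cyc3 : D ⊗[k] (D ⊗[k] D) →ₗ[k] D ⊗[k] (D ⊗[k] D)}
variable (hσ : ∀ (i j : ℤ) (x y : D), x ∈ 𝒜 i → y ∈ 𝒜 j →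
      σ (x ⊗ₜ[k] y) = ((-1 : k) ^ (i * j).natAbs) • (y ⊗ₜ[k] x))
variable (hcyc3 : ∀ (i j l : ℤ) (x y z : D), x ∈ 𝒜 i → y ∈ 𝒜 j → z ∈ 𝒜 l →
      cyc3 (x ⊗ₜ[k] (y ⊗ₜ[k] z)) =
        ((-1 : k) ^ ((i + j) * l).natAbs) • (z ⊗ₜ[k] (x ⊗ₜ[k] y)))
variable (hdeg : ∀ (i j : ℤ) (x y : D), x ∈ 𝒜 i → y ∈ 𝒜 j →
      bb x y ∈ Submodule.span k {w : D ⊗[k] D | ∃ p q : ℤ, p + q = i + j + d ∧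
        ∃ u ∈ 𝒜 p, ∃ v ∈ 𝒜 q, w = u ⊗ₜ[k] v})
variable (hleib : ∀ (i j : ℤ) (α β : D), α ∈ 𝒜 i → β ∈ 𝒜 j → ∀ γ : D,
      bb α (β * γ) =
        ((-1 : k) ^ ((i + d) * j).natAbs) •
            LinearMap.rTensor D (LinearMap.mulLeft k β) (bb α γ)
          + LinearMap.lTensor D (LinearMap.mulRight k γ) (bb α β))

include hcyc3 in
lemma cyc3_mem_G3 {w : D ⊗[k] (D ⊗[k] D)} (hw : w ∈ G3 k D 𝒜) :
    cyc3 w ∈ G3 k D 𝒜 := by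
  have : G3 k D 𝒜 ≤ (G3 k D 𝒜).comap cyc3 := by
    rw [G3, Submodule.span_le]
    rintro w ⟨i, j, l, x, hx, y, hy, z, hz, rfl⟩
    simp only [Set.mem_setOf_eq, SetLike.mem_coe, Submodule.mem_comap,
      hcyc3 i j l x y z hx hy hz]
    exact Submodule.smul_mem _ _ (Submodule.subset_span ⟨l, i, j, z, hz, x, hx, y, hy, rfl⟩)
  exact this hw

include hcyc3 in
lemma m3_cycQ {w : D ⊗[k] (D ⊗[k] D)} (hw : w ∈ G3 k D 𝒜) :
    piQ k D 𝒜 (m3 k D (cyc3 w)) = piQ k D 𝒜 (m3 k D w) := by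
  refine eq_on_span (f := piQ k D 𝒜 ∘ₗ m3 k D ∘ₗ cyc3) (g := piQ k D 𝒜 ∘ₗ m3 k D) ?_ w hw
  rintro w ⟨i, j, l, x, hx, y, hy, z, hz, rfl⟩
  simp only [LinearMap.comp_apply, hcyc3 i j l x y z hx hy hz, map_smul, m3_tmul]
  rw [swapQ' hz (SetLike.mul_mem_graded hx hy), smul_smul, ← mul_assoc x y z,
    negpow_add, negpow_even k ⟨(i + j) * l, by ring⟩, one_smul]

/-- reassociated tensors of graded spans are in `G3` -/
lemma assoc_mem_G3 {m : ℤ} {q : ℤ} {v : D} (hv : v ∈ 𝒜 q) {ω : D ⊗[k] D}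
    (hω : ω ∈ G2 k D 𝒜 m) :
    (TensorProduct.assoc k D D D).toLinearMap (ω ⊗ₜ[k] v) ∈ G3 k D 𝒜 := by
  induction hω using Submodule.span_induction with
  | mem w hw =>
    obtain ⟨p', q', _, u', hu', v', hv', rfl⟩ := hw
    rw [LinearEquiv.coe_coe, TensorProduct.assoc_tmul]
    exact Submodule.subset_span ⟨p', q', q, u', hu', v', hv', v, hv, rfl⟩
  | zero => rw [zero_tmul, map_zero]; exact Submodule.zero_mem _
  | add a b _ _ ha hb => rw [add_tmul, map_add]; exact Submodule.add_mem _ ha hb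
  | smul c a _ ha => rw [← smul_tmul', map_smul]; exact Submodule.smul_mem _ _ ha

include hdeg in
lemma brL_mem_G3 {i n : ℤ} {α : D} (hα : α ∈ 𝒜 i) {w : D ⊗[k] D}
    (hw : w ∈ G2 k D 𝒜 n) :
    brL k D bb α w ∈ G3 k D 𝒜 := by
  have : G2 k D 𝒜 n ≤ (G3 k D 𝒜).comap (brL k D bb α) := by
    rw [G2, Submodule.span_le]
    rintro w ⟨p, q, hpq, u, hu, v, hv, rfl⟩
    simp only [Set.mem_setOf_eq, SetLike.mem_coe, Submodule.mem_comap, brL,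
      LinearMap.comp_apply, LinearMap.rTensor_tmul]
    exact assoc_mem_G3 hv (bb_mem_G2 hdeg hα hu)
  exact this hw

include hdeg hleib in
/-- the key computation: `m₃(brL α w) ≡ {α, m w} - m₃(brL α (σ w))` mod commutators -/
lemma keyK (hσ : ∀ (i j : ℤ) (x y : D), x ∈ 𝒜 i → y ∈ 𝒜 j →
      σ (x ⊗ₜ[k] y) = ((-1 : k) ^ (i * j).natAbs) • (y ⊗ₜ[k] x))
    {i n : ℤ} {α : D} (hα : α ∈ 𝒜 i) {w : D ⊗[k] D} (hw : w ∈ G2 k D 𝒜 n) :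
    piQ k D 𝒜 (m3 k D (brL k D bb α w)) =
      piQ k D 𝒜 (LinearMap.mul' k D (bb α (LinearMap.mul' k D w)))
        - piQ k D 𝒜 (m3 k D (brL k D bb α (σ w))) := by
  have := eq_on_span (s := {w : D ⊗[k] D | ∃ p q : ℤ, p + q = n ∧
      ∃ u ∈ 𝒜 p, ∃ v ∈ 𝒜 q, w = u ⊗ₜ[k] v})
    (f := piQ k D 𝒜 ∘ₗ m3 k D ∘ₗ brL k D bb α)
    (g := piQ k D 𝒜 ∘ₗ LinearMap.mul' k D ∘ₗ (bb α) ∘ₗ LinearMap.mul' k D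
      - piQ k D 𝒜 ∘ₗ m3 k D ∘ₗ brL k D bb α ∘ₗ σ) ?_ w hw
  · simpa [LinearMap.sub_apply] using this
  · rintro w ⟨p, q, hpq, u, hu, v, hv, rfl⟩
    have hB : LinearMap.mul' k D (bb α v) ∈ 𝒜 (i + q + d) := br_grade hdeg hα hv
    simp only [LinearMap.comp_apply, LinearMap.sub_apply, LinearMap.mul'_apply]
    rw [hσ p q u v hu hv]
    simp only [brL, LinearMap.comp_apply, map_smul, LinearMap.rTensor_tmul]
    rw [m3_assoc, m3_assoc, leib_mul hleib hα hu v, map_add, map_smul,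
      swapQ' hu hB, smul_smul]
    have h1 : ((-1 : k) ^ ((i + d) * p).natAbs) * ((-1 : k) ^ (p * (i + q + d)).natAbs)
        = ((-1 : k) ^ (p * q).natAbs) := by
      rw [negpow_add]
      exact negpow_congr' k (p * (i + d)) (by ring)
    rw [h1]
    abel

end Bracket4
/-- abstract final combination for the Jacobi identity -/
lemma final_comb {k V : Type*} [Field k] [AddCommGroup V] [Module k V]
    (A1 A2 A3 T1 T2 T3 T1' T2' T3' : V) (ε1 ε2 ε3 s2 s3 s2' s3' : k)
    (hE1 : T1 + s2 • T2 + s3 • T3 = 0)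
    (hE2 : T1' + s2' • T3' + s3' • T2' = 0)
    (hK1 : T1 = A1 + ε1 • T1') (hK2 : T2 = A2 + ε2 • T2') (hK3 : T3 = A3 + ε3 • T3')
    (hs1 : ε1 * s3' = s2 * ε2) (hs2 : ε1 * s2' = s3 * ε3) :
    A1 + s2 • A2 + s3 • A3 = 0 := by
  have h4 : ε1 • T1' + (ε1 * s2') • T3' + (ε1 * s3') • T2' = 0 := by
    rw [← smul_smul, ← smul_smul, ← smul_add, ← smul_add, hE2, smul_zero]
  have h5 : A1 + s2 • A2 + s3 • A3 =
      (T1 + s2 • T2 + s3 • T3) - (ε1 • T1' + (s2 * ε2) • T2' + (s3 * ε3) • T3') := by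
    rw [hK1, hK2, hK3]
    simp only [smul_add, smul_smul]
    abel
  rw [h5, hE1, zero_sub, neg_eq_zero, ← hs1, ← hs2, add_right_comm]
  exact h4
/-- in a double Gerstenhaber algebra of degree `d`, the
associated bracket induces a graded Lie algebra structure on `(D/[D,D])[d]`. -/
theorem double_gerstenhaber_assoc_bracket_graded_lie_on_quotient
    (bb : D →ₗ[k] D →ₗ[k] D ⊗[k] D)
    (σ : D ⊗[k] D →ₗ[k] D ⊗[k] D)
    (hσ : ∀ (i j : ℤ) (x y : D), x ∈ 𝒜 i → y ∈ 𝒜 j →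
      σ (x ⊗ₜ[k] y) = ((-1 : k) ^ (i * j).natAbs) • (y ⊗ₜ[k] x))
    (cyc3 : D ⊗[k] (D ⊗[k] D) →ₗ[k] D ⊗[k] (D ⊗[k] D))
    (hcyc3 : ∀ (i j l : ℤ) (x y z : D), x ∈ 𝒜 i → y ∈ 𝒜 j → z ∈ 𝒜 l →
      cyc3 (x ⊗ₜ[k] (y ⊗ₜ[k] z)) =
        ((-1 : k) ^ ((i + j) * l).natAbs) • (z ⊗ₜ[k] (x ⊗ₜ[k] y)))
    (hdeg : ∀ (i j : ℤ) (x y : D), x ∈ 𝒜 i → y ∈ 𝒜 j →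
      bb x y ∈ Submodule.span k {w : D ⊗[k] D | ∃ p q : ℤ, p + q = i + j + d ∧
        ∃ u ∈ 𝒜 p, ∃ v ∈ 𝒜 q, w = u ⊗ₜ[k] v})
    (hleib : ∀ (i j : ℤ) (α β : D), α ∈ 𝒜 i → β ∈ 𝒜 j → ∀ γ : D,
      bb α (β * γ) =
        ((-1 : k) ^ ((i + d) * j).natAbs) •
            LinearMap.rTensor D (LinearMap.mulLeft k β) (bb α γ)
          + LinearMap.lTensor D (LinearMap.mulRight k γ) (bb α β))
    (hskew : ∀ (i j : ℤ) (α β : D), α ∈ 𝒜 i → β ∈ 𝒜 j →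
      bb α β = - ((-1 : k) ^ ((i + d) * (j + d)).natAbs) • σ (bb β α))
    (hjac : ∀ (i j l : ℤ) (α β γ : D), α ∈ 𝒜 i → β ∈ 𝒜 j → γ ∈ 𝒜 l →
      brL k D bb α (bb β γ)
        + ((-1 : k) ^ ((i + d) * (j + l)).natAbs) • cyc3 (brL k D bb β (bb γ α))
        + ((-1 : k) ^ ((l + d) * (i + j)).natAbs) •
            cyc3 (cyc3 (brL k D bb γ (bb α β))) = 0) :
    -- well-definedness on the quotient by graded commutators
    (∀ x ∈ gradedComm k D 𝒜, ∀ γ : D,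
      LinearMap.mul' k D (bb x γ) ∈ gradedComm k D 𝒜 ∧
      LinearMap.mul' k D (bb γ x) ∈ gradedComm k D 𝒜) ∧
    -- graded antisymmetry for the `d`-shifted degrees
    (∀ (i j : ℤ) (α β : D), α ∈ 𝒜 i → β ∈ 𝒜 j →
      LinearMap.mul' k D (bb α β)
        + ((-1 : k) ^ ((i + d) * (j + d)).natAbs) • LinearMap.mul' k D (bb β α) ∈
        gradedComm k D 𝒜) ∧
    -- graded Jacobi identity for the `d`-shifted degrees
    (∀ (i j l : ℤ) (α β γ : D), α ∈ 𝒜 i → β ∈ 𝒜 j → γ ∈ 𝒜 l →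
      LinearMap.mul' k D (bb α (LinearMap.mul' k D (bb β γ)))
        - LinearMap.mul' k D (bb (LinearMap.mul' k D (bb α β)) γ)
        - ((-1 : k) ^ ((i + d) * (j + d)).natAbs) •
            LinearMap.mul' k D (bb β (LinearMap.mul' k D (bb α γ))) ∈
        gradedComm k D 𝒜) := by
  refine ⟨?_, ?_, ?_⟩
  · -- Part 1: well-definedness
    intro x hx γ
    exact ⟨(piQ_eq_zero k D 𝒜).mp (part1_left hσ hdeg hleib hskew x hx γ),
           (piQ_eq_zero k D 𝒜).mp (part1_right hdeg hleib x hx γ)⟩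
  · -- Part 2: graded antisymmetry
    intro i j α β hα hβ
    refine (piQ_eq_zero k D 𝒜).mp ?_
    rw [map_add, map_smul, antisQ hσ hdeg hskew hα hβ, neg_smul, neg_add_cancel]
  · -- Part 3: graded Jacobi
    intro i j l α β γ hα hβ hγ
    refine (piQ_eq_zero k D 𝒜).mp ?_
    -- the three cyclic Jacobi relations after multiplication, mod commutators
    have hE1 := congrArg (fun w => piQ k D 𝒜 (m3 k D w)) (hjac i j l α β γ hα hβ hγ)
    simp only [map_add, map_smul, map_zero] at hE1
    rw [m3_cycQ hcyc3 (brL_mem_G3 hdeg hβ (bb_mem_G2 hdeg hγ hα)),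
      m3_cycQ hcyc3 (cyc3_mem_G3 hcyc3 (brL_mem_G3 hdeg hγ (bb_mem_G2 hdeg hα hβ))),
      m3_cycQ hcyc3 (brL_mem_G3 hdeg hγ (bb_mem_G2 hdeg hα hβ))] at hE1
    have hE2 := congrArg (fun w => piQ k D 𝒜 (m3 k D w)) (hjac i l j α γ β hα hγ hβ)
    simp only [map_add, map_smul, map_zero] at hE2
    rw [m3_cycQ hcyc3 (brL_mem_G3 hdeg hγ (bb_mem_G2 hdeg hβ hα)),
      m3_cycQ hcyc3 (cyc3_mem_G3 hcyc3 (brL_mem_G3 hdeg hβ (bb_mem_G2 hdeg hα hγ))),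
      m3_cycQ hcyc3 (brL_mem_G3 hdeg hβ (bb_mem_G2 hdeg hα hγ))] at hE2
    -- the keyK relations
    have hK1 := keyK hdeg hleib hσ hα (bb_mem_G2 hdeg hβ hγ)
    rw [σ_bb hσ hdeg hskew hβ hγ, map_smul, map_smul, map_smul, neg_smul,
      sub_neg_eq_add] at hK1
    have hK2 := keyK hdeg hleib hσ hβ (bb_mem_G2 hdeg hγ hα)
    rw [σ_bb hσ hdeg hskew hγ hα, map_smul, map_smul, map_smul, neg_smul,
      sub_neg_eq_add] at hK2
    have hK3 := keyK hdeg hleib hσ hγ (bb_mem_G2 hdeg hα hβ)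
    rw [σ_bb hσ hdeg hskew hα hβ, map_smul, map_smul, map_smul, neg_smul,
      sub_neg_eq_add] at hK3
    -- reduction of the mixed-bracket terms to A2 and A3
    have hX3 := antisQ hσ hdeg hskew (br_grade hdeg hα hβ) hγ
    have hz : LinearMap.mul' k D (bb α γ)
        + ((-1 : k) ^ ((i + d) * (l + d)).natAbs) • LinearMap.mul' k D (bb γ α) ∈
        gradedComm k D 𝒜 := by
      refine (piQ_eq_zero k D 𝒜).mp ?_
      rw [map_add, map_smul, antisQ hσ hdeg hskew hα hγ, neg_smul, neg_add_cancel]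
    have hX2 := part1_right hdeg hleib _ hz β
    rw [map_add, map_smul, map_add, map_smul, map_add, map_smul] at hX2
    have hX2' : piQ k D 𝒜 (LinearMap.mul' k D (bb β (LinearMap.mul' k D (bb α γ)))) =
        -((-1 : k) ^ ((i + d) * (l + d)).natAbs) •
          piQ k D 𝒜 (LinearMap.mul' k D (bb β (LinearMap.mul' k D (bb γ α)))) := by
      rw [neg_smul, eq_neg_iff_add_eq_zero]
      exact hX2
    -- main combination
    have key0 := final_comb
      (piQ k D 𝒜 (LinearMap.mul' k D (bb α (LinearMap.mul' k D (bb β γ)))))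
      (piQ k D 𝒜 (LinearMap.mul' k D (bb β (LinearMap.mul' k D (bb γ α)))))
      (piQ k D 𝒜 (LinearMap.mul' k D (bb γ (LinearMap.mul' k D (bb α β)))))
      _ _ _ _ _ _ _ _ _ _ _ _ _ hE1 hE2 hK1 hK2 hK3
      (by rw [negpow_add, negpow_add]; exact negpow_congr' k (l * (j - i)) (by ring))
      (by rw [negpow_add, negpow_add]; exact negpow_congr' k (d * (l - i)) (by ring))
    -- finish
    rw [map_sub, map_sub, map_smul, hX3, hX2']
    simp only [neg_smul, smul_neg, sub_neg_eq_add, smul_smul]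
    have c1 : ((-1 : k) ^ ((i + d) * (j + d)).natAbs) *
        ((-1 : k) ^ ((i + d) * (l + d)).natAbs)
        = ((-1 : k) ^ ((i + d) * (j + l)).natAbs) := by
      rw [negpow_add]; exact negpow_congr' k (d * (i + d)) (by ring)
    have c2 : ((-1 : k) ^ ((i + j + d + d) * (l + d)).natAbs)
        = ((-1 : k) ^ ((l + d) * (i + j)).natAbs) :=
      negpow_congr' k (d * (l + d)) (by ring)
    rw [c1, c2]
    rw [add_right_comm]
    exact key0
end
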